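/- Let μ be a probability measure on ℝ² with continuous marginal cumulative distribution functions F_X and F_Y and support S. If the absolutely continuous component of μ with respect to two-dimensional Lebesgue measure λ₂ is nonzero, then there do not exist functions f : ℝ → ℝ and g : ℝ → ℝ and a constant c such that F_X(x)·F_Y(y) − f(x) − g(y) = c for all (x,y) ∈ S. -/

import Mathlib

open MeasureTheory Set Metric Filter
open scoped ENNReal NNReal

namespace Stmt17Aux

lemma aux_lower {a b c : ℝ≥0∞} {u v : ℝ} (h : a ≤ b + c)
    (ha : ENNReal.ofReal u ≤ a) (hc : c ≤ ENNReal.ofReal v) (hv : 0 ≤ v) :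
    ENNReal.ofReal (u - v) ≤ b := by
  rw [ENNReal.ofReal_sub u hv]
  exact le_trans (tsub_le_tsub ha hc) (tsub_le_iff_right.2 h)

lemma aux_upper {a b : ℝ≥0∞} {u v : ℝ} (hv : 0 ≤ v)
    (h : a + b = ENNReal.ofReal u) (ha : ENNReal.ofReal v ≤ a) :
    b ≤ ENNReal.ofReal (u - v) := by
  rw [ENNReal.ofReal_sub u hv]
  have hafin : a ≠ ∞ := by
    intro htop
    rw [htop] at h; rw [top_add] at h
    exact (ENNReal.ofReal_ne_top h.symm).elim
  have hb : b = ENNReal.ofReal u - a := by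
    rw [← h, ENNReal.add_sub_cancel_left hafin]
  rw [hb]
  exact tsub_le_tsub_left ha _

/-- a density point extraction -/
lemma aux_density {α : Type*} [MetricSpace α] [MeasurableSpace α] [BorelSpace α]
    [SecondCountableTopology α] [HasBesicovitchCovering α]
    (μ : Measure α) [IsLocallyFiniteMeasure μ]
    {K : Set α} (hK : MeasurableSet K) (hpos : μ K ≠ 0) :
    ∃ x ∈ K, Tendsto (fun r => μ (K ∩ closedBall x r) / μ (closedBall x r))
      (nhdsWithin 0 (Ioi 0)) (nhds 1) := by
  have h := Besicovitch.ae_tendsto_measure_inter_div μ K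
  have h2 : ∀ᵐ x ∂μ.restrict K, x ∈ K := ae_restrict_mem hK
  haveI : (ae (μ.restrict K)).NeBot := by
    rw [ae_neBot]
    intro h0
    exact hpos (by simpa using congrArg (fun m => m univ) h0)
  obtain ⟨x, hx1, hx2⟩ := (h.and h2).exists
  exact ⟨x, hx2, hx1⟩

/-- two points of K with positive measure in between -/
lemma aux_pair {K : Set ℝ} (hK : MeasurableSet K) (hpos : volume K ≠ 0) :
    ∃ x1 ∈ K, ∃ x2 ∈ K, x1 < x2 ∧ volume (K ∩ Ioo x1 x2) ≠ 0 := by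
  obtain ⟨x, hxK, hx⟩ := aux_density volume hK hpos
  have h34 : (ENNReal.ofReal (3/4) : ℝ≥0∞) < 1 := by
    rw [show (1 : ℝ≥0∞) = ENNReal.ofReal 1 by simp]
    exact (ENNReal.ofReal_lt_ofReal_iff (by norm_num)).2 (by norm_num)
  have hev : ∀ᶠ s in nhdsWithin (0:ℝ) (Ioi 0),
      ENNReal.ofReal (3/4) < volume (K ∩ closedBall x s) / volume (closedBall x s) :=
    hx (Ioi_mem_nhds h34)
  rw [eventually_nhdsWithin_iff, Metric.eventually_nhds_iff] at hev
  obtain ⟨ε, hε, hball⟩ := hev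
  have key : ∀ s : ℝ, 0 < s → s < ε →
      ENNReal.ofReal (3/2 * s) ≤ volume (K ∩ closedBall x s) := by
    intro s hs hsε
    have hd : dist s (0:ℝ) < ε := by
      rw [Real.dist_eq, sub_zero, abs_of_pos hs]; exact hsε
    have h1 := hball hd (mem_Ioi.2 hs)
    have hvb : volume (closedBall x s) = ENNReal.ofReal (2 * s) := by
      rw [Real.closedBall_eq_Icc, Real.volume_Icc]
      congr 1; ring
    rw [hvb] at h1
    have h2 := (ENNReal.lt_div_iff_mul_lt
      (Or.inl (by rw [Ne, ENNReal.ofReal_eq_zero]; push_neg; linarith))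
      (Or.inl ENNReal.ofReal_ne_top)).1 h1
    calc ENNReal.ofReal (3/2 * s) = ENNReal.ofReal (3/4) * ENNReal.ofReal (2*s) := by
          rw [← ENNReal.ofReal_mul (by norm_num)]; congr 1; ring
      _ ≤ volume (K ∩ closedBall x s) := le_of_lt h2
  set s := ε/2 with hsdef
  have hs : 0 < s := by positivity
  have hsε : s < ε := by rw [hsdef]; linarith
  have hks := key s hs hsε
  rw [Real.closedBall_eq_Icc] at hks
  have hleft : ENNReal.ofReal (s/2) ≤ volume (K ∩ Ico (x-s) x) := by
    have hsplit : volume (K ∩ Icc (x-s) (x+s)) ≤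
        volume (K ∩ Ico (x-s) x) + volume (K ∩ Icc x (x+s)) := by
      refine le_trans (measure_mono ?_) (measure_union_le _ _)
      rintro z ⟨hz1, hz2⟩
      rcases lt_or_ge z x with h | h
      · exact Or.inl ⟨hz1, hz2.1, h⟩
      · exact Or.inr ⟨hz1, h, hz2.2⟩
    have h2 : volume (K ∩ Icc x (x+s)) ≤ ENNReal.ofReal s := by
      refine le_trans (measure_mono inter_subset_right) ?_
      rw [Real.volume_Icc]
      exact ENNReal.ofReal_le_ofReal (by linarith)
    have h3 := aux_lower (le_trans hks hsplit) le_rfl h2 (le_of_lt hs)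
    calc ENNReal.ofReal (s/2) = ENNReal.ofReal (3/2*s - s) := by congr 1; ring
      _ ≤ _ := h3
  have hright : ENNReal.ofReal (s/2) ≤ volume (K ∩ Ioc x (x+s)) := by
    have hsplit : volume (K ∩ Icc (x-s) (x+s)) ≤
        volume (K ∩ Ioc x (x+s)) + volume (K ∩ Icc (x-s) x) := by
      refine le_trans (measure_mono ?_) (measure_union_le _ _)
      rintro z ⟨hz1, hz2⟩
      rcases lt_or_ge x z with h | h
      · exact Or.inl ⟨hz1, h, hz2.2⟩
      · exact Or.inr ⟨hz1, hz2.1, h⟩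
    have h2 : volume (K ∩ Icc (x-s) x) ≤ ENNReal.ofReal s := by
      refine le_trans (measure_mono inter_subset_right) ?_
      rw [Real.volume_Icc]
      exact ENNReal.ofReal_le_ofReal (by linarith)
    have h3 := aux_lower (le_trans hks hsplit) le_rfl h2 (le_of_lt hs)
    calc ENNReal.ofReal (s/2) = ENNReal.ofReal (3/2*s - s) := by congr 1; ring
      _ ≤ _ := h3
  have hne1 : (K ∩ Ico (x-s) x).Nonempty := by
    apply nonempty_of_measure_ne_zero (μ := volume)
    intro h0; rw [h0, le_zero_iff, ENNReal.ofReal_eq_zero] at hleft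
    linarith
  have hne2 : (K ∩ Ioc x (x+s)).Nonempty := by
    apply nonempty_of_measure_ne_zero (μ := volume)
    intro h0; rw [h0, le_zero_iff, ENNReal.ofReal_eq_zero] at hright
    linarith
  obtain ⟨x1, hx1K, hx1a, hx1b⟩ := hne1
  obtain ⟨x2, hx2K, hx2a, hx2b⟩ := hne2
  refine ⟨x1, hx1K, x2, hx2K, lt_trans hx1b hx2a, ?_⟩
  have hm : 0 < min (x - x1) (x2 - x) := lt_min (by linarith) (by linarith)
  set s' := min (x - x1) (x2 - x) / 2 with hs'def
  have hs'pos : 0 < s' := by positivity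
  have hs'lt : s' < ε := by
    have h1 : min (x - x1) (x2 - x) ≤ x - x1 := min_le_left _ _
    have h2 : x - x1 ≤ s := by linarith
    rw [hs'def]; linarith
  have hsub : closedBall x s' ⊆ Ioo x1 x2 := by
    rw [Real.closedBall_eq_Icc]
    intro z hz
    have h1 : min (x - x1) (x2 - x) ≤ x - x1 := min_le_left _ _
    have h2 : min (x - x1) (x2 - x) ≤ x2 - x := min_le_right _ _
    obtain ⟨hz1, hz2⟩ := hz
    constructor
    · rw [hs'def] at hz1; linarith
    · rw [hs'def] at hz2; linarith
  have hfin : ENNReal.ofReal (3/2*s') ≤ volume (K ∩ Ioo x1 x2) :=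
    le_trans (key s' hs'pos hs'lt) (measure_mono (inter_subset_inter_right _ hsub))
  intro h0
  rw [h0, le_zero_iff, ENNReal.ofReal_eq_zero] at hfin
  linarith

end Stmt17Aux
set_option maxHeartbeats 2000000 in
theorem stmt_17
    (μ : Measure (ℝ × ℝ)) [IsProbabilityMeasure μ]
    (FX FY : ℝ → ℝ)
    (hFX : ∀ x, FX x = (μ (Iic x ×ˢ (univ : Set ℝ))).toReal)
    (hFY : ∀ y, FY y = (μ ((univ : Set ℝ) ×ˢ Iic y)).toReal)
    (hFXcont : Continuous FX) (hFYcont : Continuous FY)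
    (S : Set (ℝ × ℝ))
    (hSclosed : IsClosed S) (hSfull : μ Sᶜ = 0)
    (hSmin : ∀ T : Set (ℝ × ℝ), IsClosed T → μ Tᶜ = 0 → S ⊆ T)
    (μac μsing : Measure (ℝ × ℝ))
    (hdecomp : μ = μac + μsing)
    (hac : μac ≪ (volume : Measure (ℝ × ℝ)))
    (hsing : μsing ⟂ₘ (volume : Measure (ℝ × ℝ)))
    (hne : μac ≠ 0) :
    ¬ ∃ (f g : ℝ → ℝ) (c : ℝ), ∀ p ∈ S, FX p.1 * FY p.2 - f p.1 - g p.2 = c := by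
  rintro ⟨f, g, c, hfg⟩
  have hμacle : ∀ U, μac U ≤ μ U := by
    intro U
    rw [hdecomp, Measure.add_apply]
    exact le_self_add
  haveI : IsFiniteMeasure μac := by
    constructor
    calc μac univ ≤ μ univ := hμacle univ
      _ < ⊤ := measure_lt_top μ univ
  set ρ := μac.rnDeriv volume with hρdef
  have hρmeas : Measurable ρ := Measure.measurable_rnDeriv _ _
  have hwd : volume.withDensity ρ = μac := Measure.withDensity_rnDeriv_eq μac volume hac
  set P : Set (ℝ × ℝ) := S ∩ {p | 0 < ρ p} with hPdef
  have hPmeas : MeasurableSet P :=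
    hSclosed.measurableSet.inter (measurableSet_lt measurable_const hρmeas)
  have hPsub : P ⊆ S := inter_subset_left
  have hacS : μac Sᶜ = 0 := by
    have h := hSfull
    rw [hdecomp, Measure.add_apply, add_eq_zero] at h
    exact h.1
  have hZ : μac {p | ρ p = 0} = 0 := by
    have hZm : MeasurableSet {p | ρ p = 0} := hρmeas (measurableSet_singleton 0)
    rw [← hwd, withDensity_apply _ hZm]
    calc ∫⁻ p in {p | ρ p = 0}, ρ p ∂volume
        = ∫⁻ _ in {p | ρ p = 0}, 0 ∂volume := by
          apply setLIntegral_congr_fun hZm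
          exact fun p hp => hp
      _ = 0 := lintegral_zero
  have hPc : μac Pᶜ = 0 := by
    have hsub : Pᶜ ⊆ Sᶜ ∪ {p | ρ p = 0} := by
      intro p hp
      rw [hPdef] at hp
      simp only [mem_compl_iff, mem_inter_iff, mem_setOf_eq, not_and_or] at hp
      rcases hp with h | h
      · exact Or.inl h
      · exact Or.inr (by simpa [pos_iff_ne_zero] using h)
    exact measure_mono_null hsub (measure_union_null hacS hZ)
  have hμacP : μac P ≠ 0 := by
    intro h0
    apply hne
    rw [← Measure.measure_univ_eq_zero, ← measure_add_measure_compl hPmeas, h0, hPc, add_zero]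
  have hvolP : volume P ≠ 0 := fun h => hμacP (hac h)

  -- positivity transfer: positive overlap with P implies positive μ measure
  have hμU : ∀ U : Set (ℝ × ℝ), MeasurableSet U → volume (P ∩ U) ≠ 0 → μ U ≠ 0 := by
    intro U hU hPU h0
    have hacU : μac U = 0 := le_antisymm (h0 ▸ hμacle U) (zero_le)
    rw [← hwd, withDensity_apply _ hU] at hacU
    have h2 : ∫⁻ p in P ∩ U, ρ p ∂volume = 0 :=
      le_antisymm (hacU ▸ lintegral_mono_set inter_subset_right) (zero_le)
    rw [lintegral_eq_zero_iff hρmeas] at h2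
    have h3 : ∀ᵐ p ∂(volume.restrict (P ∩ U)), False := by
      filter_upwards [h2, ae_restrict_mem (hPmeas.inter hU)] with p hp1 hp2
      exact absurd hp1 (ne_of_gt hp2.1.2)
    rw [ae_iff] at h3
    apply hPU
    simpa using h3
  -- 2-d density point of P
  obtain ⟨⟨a, b⟩, habP, htend⟩ := Stmt17Aux.aux_density (volume : Measure (ℝ × ℝ)) hPmeas hvolP
  have h31 : (ENNReal.ofReal (31/32) : ℝ≥0∞) < 1 := by
    rw [show (1 : ℝ≥0∞) = ENNReal.ofReal 1 by simp]
    exact (ENNReal.ofReal_lt_ofReal_iff (by norm_num)).2 (by norm_num)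
  have hev : ∀ᶠ s in nhdsWithin (0:ℝ) (Ioi 0), ENNReal.ofReal (31/32) <
      volume (P ∩ closedBall ((a, b) : ℝ × ℝ) s) / volume (closedBall ((a, b) : ℝ × ℝ) s) :=
    htend (Ioi_mem_nhds h31)
  obtain ⟨r, hrball, hr0mem⟩ := (hev.and self_mem_nhdsWithin).exists
  have hr0 : 0 < r := hr0mem
  set I : Set ℝ := Icc (a - r) (a + r) with hIdef
  set J : Set ℝ := Icc (b - r) (b + r) with hJdef
  set B : Set (ℝ × ℝ) := I ×ˢ J with hBdef
  have hBeq : closedBall ((a, b) : ℝ × ℝ) r = B := by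
    rw [← closedBall_prod_same, Real.closedBall_eq_Icc, Real.closedBall_eq_Icc]
  have hImeas : MeasurableSet I := measurableSet_Icc
  have hJmeas : MeasurableSet J := measurableSet_Icc
  have hBmeas : MeasurableSet B := hImeas.prod hJmeas
  have hvolI : volume I = ENNReal.ofReal (2 * r) := by
    rw [hIdef, Real.volume_Icc]; congr 1; ring
  have hvolJ : volume J = ENNReal.ofReal (2 * r) := by
    rw [hJdef, Real.volume_Icc]; congr 1; ring
  have hvolB : volume B = ENNReal.ofReal (4 * r^2) := by
    rw [hBdef, Measure.volume_eq_prod, Measure.prod_prod, hvolI, hvolJ,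
      ← ENNReal.ofReal_mul (by linarith)]
    congr 1; ring
  rw [hBeq] at hrball
  have hvolBne : volume B ≠ 0 := by
    rw [hvolB, Ne, ENNReal.ofReal_eq_zero]; push_neg; positivity
  have hvolBtop : volume B ≠ ⊤ := by rw [hvolB]; exact ENNReal.ofReal_ne_top
  have hPB : ENNReal.ofReal (31/32 * (4*r^2)) ≤ volume (B ∩ P) := by
    have h2 := (ENNReal.lt_div_iff_mul_lt (Or.inl hvolBne) (Or.inl hvolBtop)).1 hrball
    rw [inter_comm]
    calc ENNReal.ofReal (31/32 * (4*r^2))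
        = ENNReal.ofReal (31/32) * ENNReal.ofReal (4*r^2) := ENNReal.ofReal_mul (by norm_num)
      _ = ENNReal.ofReal (31/32) * volume B := by rw [hvolB]
      _ ≤ volume (P ∩ B) := le_of_lt h2
  set D : Set (ℝ × ℝ) := B \ P with hDdef
  have hDmeas : MeasurableSet D := hBmeas.diff hPmeas
  have hDvol : volume D ≤ ENNReal.ofReal (r^2/8) := by
    have hsum : volume (B ∩ P) + volume (B \ P) = volume B := measure_inter_add_diff B hPmeas
    rw [hvolB] at hsum
    have h1 := Stmt17Aux.aux_upper (by positivity) hsum hPB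
    calc volume D ≤ ENNReal.ofReal (4*r^2 - 31/32*(4*r^2)) := h1
      _ = ENNReal.ofReal (r^2/8) := by congr 1; ring
  -- columns
  set colD : ℝ → ℝ≥0∞ := fun x => volume (Prod.mk x ⁻¹' D) with hcolDdef
  have hcolmeas : Measurable colD := measurable_measure_prodMk_left hDmeas
  have hcolint : ∫⁻ x, colD x = volume D := by
    rw [hcolDdef, ← Measure.prod_apply hDmeas]; rfl
  set Bad : Set ℝ := {x | ENNReal.ofReal (r/2) ≤ colD x} with hBaddef
  have hBadmeas : MeasurableSet Bad := hcolmeas measurableSet_Ici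
  have hBadvol : volume Bad ≤ ENNReal.ofReal (r/4) := by
    have h1 := meas_ge_le_lintegral_div (μ := (volume : Measure ℝ)) hcolmeas.aemeasurable
      (ε := ENNReal.ofReal (r/2))
      (by rw [Ne, ENNReal.ofReal_eq_zero]; push_neg; linarith) ENNReal.ofReal_ne_top
    calc volume Bad ≤ (∫⁻ x, colD x) / ENNReal.ofReal (r/2) := h1
      _ ≤ ENNReal.ofReal (r^2/8) / ENNReal.ofReal (r/2) := by
          rw [hcolint]; exact ENNReal.div_le_div_right hDvol _
      _ = ENNReal.ofReal ((r^2/8)/(r/2)) := (ENNReal.ofReal_div_of_pos (by linarith)).symm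
      _ = ENNReal.ofReal (r/4) := by congr 1; field_simp; ring
  set G : Set ℝ := I \ Bad with hGdef
  have hGmeas : MeasurableSet G := hImeas.diff hBadmeas
  have hGvol : ENNReal.ofReal (7*r/4) ≤ volume G := by
    have hsub : I ⊆ G ∪ Bad := by
      intro z hz; by_cases h : z ∈ Bad
      exacts [Or.inr h, Or.inl ⟨hz, h⟩]
    have h1 : volume I ≤ volume G + volume Bad :=
      le_trans (measure_mono hsub) (measure_union_le _ _)
    have h2 := Stmt17Aux.aux_lower h1 (le_of_eq hvolI.symm) hBadvol (by linarith)
    calc ENNReal.ofReal (7*r/4) = ENNReal.ofReal (2*r - r/4) := by congr 1; ring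
      _ ≤ volume G := h2
  have hsliceD : ∀ x ∈ I, Prod.mk x ⁻¹' D = J \ Prod.mk x ⁻¹' P := by
    intro x hx
    ext y
    simp only [hDdef, hBdef, mem_preimage, mem_diff, mem_prod]
    tauto
  have hGslice : ∀ x ∈ G, ENNReal.ofReal (3*r/2) ≤ volume (J ∩ Prod.mk x ⁻¹' P) := by
    intro x hx
    have hxlt : colD x < ENNReal.ofReal (r/2) := not_le.1 hx.2
    have hsub : J ⊆ (J ∩ Prod.mk x ⁻¹' P) ∪ (J \ Prod.mk x ⁻¹' P) := by
      intro z hz; by_cases h : z ∈ Prod.mk x ⁻¹' P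
      exacts [Or.inl ⟨hz, h⟩, Or.inr ⟨hz, h⟩]
    have h1 : volume J ≤ volume (J ∩ Prod.mk x ⁻¹' P) + volume (J \ Prod.mk x ⁻¹' P) :=
      le_trans (measure_mono hsub) (measure_union_le _ _)
    rw [← hsliceD x hx.1] at h1
    have h2 := Stmt17Aux.aux_lower h1 (le_of_eq hvolJ.symm) (le_of_lt hxlt) (by linarith)
    calc ENNReal.ofReal (3*r/2) = ENNReal.ofReal (2*r - r/2) := by congr 1; ring
      _ ≤ _ := h2
  -- rows
  set rowD : ℝ → ℝ≥0∞ := fun y => volume ((fun x => (x, y)) ⁻¹' D) with hrowDdef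
  have hrowmeas : Measurable rowD := measurable_measure_prodMk_right hDmeas
  have hrowint : ∫⁻ y, rowD y = volume D := by
    rw [hrowDdef, ← Measure.prod_apply_symm hDmeas]; rfl
  set BadY : Set ℝ := {y | ENNReal.ofReal (r/2) ≤ rowD y} with hBadYdef
  have hBadYmeas : MeasurableSet BadY := hrowmeas measurableSet_Ici
  have hBadYvol : volume BadY ≤ ENNReal.ofReal (r/4) := by
    have h1 := meas_ge_le_lintegral_div (μ := (volume : Measure ℝ)) hrowmeas.aemeasurable
      (ε := ENNReal.ofReal (r/2))
      (by rw [Ne, ENNReal.ofReal_eq_zero]; push_neg; linarith) ENNReal.ofReal_ne_top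
    calc volume BadY ≤ (∫⁻ y, rowD y) / ENNReal.ofReal (r/2) := h1
      _ ≤ ENNReal.ofReal (r^2/8) / ENNReal.ofReal (r/2) := by
          rw [hrowint]; exact ENNReal.div_le_div_right hDvol _
      _ = ENNReal.ofReal ((r^2/8)/(r/2)) := (ENNReal.ofReal_div_of_pos (by linarith)).symm
      _ = ENNReal.ofReal (r/4) := by congr 1; field_simp; ring
  have hsliceDrow : ∀ y ∈ J, (fun x => (x, y)) ⁻¹' D = I \ (fun x => (x, y)) ⁻¹' P := by
    intro y hy
    ext x
    simp only [hDdef, hBdef, mem_preimage, mem_diff, mem_prod]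
    tauto
  have hHslice : ∀ y ∈ J, y ∉ BadY →
      ENNReal.ofReal (3*r/2) ≤ volume (I ∩ (fun x => (x, y)) ⁻¹' P) := by
    intro y hyJ hyB
    have hylt : rowD y < ENNReal.ofReal (r/2) := not_le.1 hyB
    have hsub : I ⊆ (I ∩ (fun x => (x, y)) ⁻¹' P) ∪ (I \ (fun x => (x, y)) ⁻¹' P) := by
      intro z hz; by_cases h : z ∈ (fun x => (x, y)) ⁻¹' P
      exacts [Or.inl ⟨hz, h⟩, Or.inr ⟨hz, h⟩]
    have h1 : volume I ≤ volume (I ∩ (fun x => (x, y)) ⁻¹' P)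
        + volume (I \ (fun x => (x, y)) ⁻¹' P) :=
      le_trans (measure_mono hsub) (measure_union_le _ _)
    rw [← hsliceDrow y hyJ] at h1
    have h2 := Stmt17Aux.aux_lower h1 (le_of_eq hvolI.symm) (le_of_lt hylt) (by linarith)
    calc ENNReal.ofReal (3*r/2) = ENNReal.ofReal (2*r - r/2) := by congr 1; ring
      _ ≤ _ := h2
  -- pick x1 < x2 in G
  have hGne : volume G ≠ 0 := by
    intro h0; rw [h0, le_zero_iff, ENNReal.ofReal_eq_zero] at hGvol; linarith
  obtain ⟨x1, hx1G, x2, hx2G, hx12, hGmid⟩ := Stmt17Aux.aux_pair hGmeas hGne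
  -- the good set of y's
  set K : Set ℝ := ((J ∩ Prod.mk x1 ⁻¹' P) ∩ Prod.mk x2 ⁻¹' P) \ BadY with hKdef
  have hKmeas : MeasurableSet K :=
    ((hJmeas.inter (hPmeas.preimage measurable_prodMk_left)).inter
      (hPmeas.preimage measurable_prodMk_left)).diff hBadYmeas
  have hb1 : volume (J \ Prod.mk x1 ⁻¹' P) ≤ ENNReal.ofReal (r/2) := by
    rw [← hsliceD x1 hx1G.1]
    exact le_of_lt (not_le.1 hx1G.2)
  have hb2 : volume (J \ Prod.mk x2 ⁻¹' P) ≤ ENNReal.ofReal (r/2) := by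
    rw [← hsliceD x2 hx2G.1]
    exact le_of_lt (not_le.1 hx2G.2)
  have hKvol : ENNReal.ofReal (3*r/4) ≤ volume K := by
    have hsub : J ⊆ K ∪ ((J \ Prod.mk x1 ⁻¹' P) ∪ ((J \ Prod.mk x2 ⁻¹' P) ∪ BadY)) := by
      intro z hz
      by_cases h1 : z ∈ Prod.mk x1 ⁻¹' P
      · by_cases h2 : z ∈ Prod.mk x2 ⁻¹' P
        · by_cases h3 : z ∈ BadY
          · exact Or.inr (Or.inr (Or.inr h3))
          · exact Or.inl ⟨⟨⟨hz, h1⟩, h2⟩, h3⟩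
        · exact Or.inr (Or.inr (Or.inl ⟨hz, h2⟩))
      · exact Or.inr (Or.inl ⟨hz, h1⟩)
    have hrest : volume ((J \ Prod.mk x1 ⁻¹' P) ∪ ((J \ Prod.mk x2 ⁻¹' P) ∪ BadY))
        ≤ ENNReal.ofReal (5*r/4) := by
      refine le_trans (measure_union_le _ _) (le_trans (add_le_add hb1
        (le_trans (measure_union_le _ _) (add_le_add hb2 hBadYvol))) ?_)
      rw [← ENNReal.ofReal_add (by linarith) (by linarith),
        ← ENNReal.ofReal_add (by linarith) (by linarith)]
      exact ENNReal.ofReal_le_ofReal (by linarith)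
    have h1 : volume J ≤ volume K + volume ((J \ Prod.mk x1 ⁻¹' P)
        ∪ ((J \ Prod.mk x2 ⁻¹' P) ∪ BadY)) :=
      le_trans (measure_mono hsub) (measure_union_le _ _)
    have h2 := Stmt17Aux.aux_lower h1 (le_of_eq hvolJ.symm) hrest (by linarith)
    calc ENNReal.ofReal (3*r/4) = ENNReal.ofReal (2*r - 5*r/4) := by congr 1; ring
      _ ≤ _ := h2
  have hKne : volume K ≠ 0 := by
    intro h0; rw [h0, le_zero_iff, ENNReal.ofReal_eq_zero] at hKvol; linarith
  obtain ⟨y1, hy1K, y2, hy2K, hy12, hKmid⟩ := Stmt17Aux.aux_pair hKmeas hKne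
  -- strips have positive μ measure
  have hstripX : volume (P ∩ (Ioo x1 x2 ×ˢ (univ : Set ℝ))) ≠ 0 := by
    set A := P ∩ (Ioo x1 x2 ×ˢ (univ : Set ℝ)) with hAdef
    have hAmeas : MeasurableSet A := hPmeas.inter (measurableSet_Ioo.prod MeasurableSet.univ)
    have hAint : volume A = ∫⁻ x, volume (Prod.mk x ⁻¹' A) := by
      rw [← Measure.prod_apply hAmeas]; rfl
    have hlow : ENNReal.ofReal (3*r/2) * volume (G ∩ Ioo x1 x2) ≤ volume A := by
      rw [hAint]
      refine le_trans ?_ (setLIntegral_le_lintegral (G ∩ Ioo x1 x2) _)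
      rw [← setLIntegral_const (G ∩ Ioo x1 x2) _]
      refine setLIntegral_mono (measurable_measure_prodMk_left hAmeas) ?_
      intro x hx
      have hx' : Prod.mk x ⁻¹' A = Prod.mk x ⁻¹' P := by
        ext y; simp [hAdef, hx.2]
      rw [hx']
      exact le_trans (hGslice x hx.1) (measure_mono inter_subset_right)
    intro h0
    rw [h0, le_zero_iff] at hlow
    rcases mul_eq_zero.1 hlow with h | h
    · rw [ENNReal.ofReal_eq_zero] at h; linarith
    · exact hGmid h
  have hstripY : volume (P ∩ ((univ : Set ℝ) ×ˢ Ioo y1 y2)) ≠ 0 := by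
    set A := P ∩ ((univ : Set ℝ) ×ˢ Ioo y1 y2) with hAdef
    have hAmeas : MeasurableSet A := hPmeas.inter (MeasurableSet.univ.prod measurableSet_Ioo)
    have hAint : volume A = ∫⁻ y, volume ((fun x => (x, y)) ⁻¹' A) := by
      rw [← Measure.prod_apply_symm hAmeas]; rfl
    have hlow : ENNReal.ofReal (3*r/2) * volume (K ∩ Ioo y1 y2) ≤ volume A := by
      rw [hAint]
      refine le_trans ?_ (setLIntegral_le_lintegral (K ∩ Ioo y1 y2) _)
      rw [← setLIntegral_const (K ∩ Ioo y1 y2) _]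
      refine setLIntegral_mono (measurable_measure_prodMk_right hAmeas) ?_
      intro y hy
      have hy' : (fun x => (x, y)) ⁻¹' A = (fun x => (x, y)) ⁻¹' P := by
        ext x; simp [hAdef, hy.2]
      rw [hy']
      exact le_trans (hHslice y hy.1.1.1.1 hy.1.2) (measure_mono inter_subset_right)
    intro h0
    rw [h0, le_zero_iff] at hlow
    rcases mul_eq_zero.1 hlow with h | h
    · rw [ENNReal.ofReal_eq_zero] at h; linarith
    · exact hKmid h
  have hμX : μ (Ioo x1 x2 ×ˢ (univ : Set ℝ)) ≠ 0 :=
    hμU _ (measurableSet_Ioo.prod MeasurableSet.univ) hstripX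
  have hμY : μ ((univ : Set ℝ) ×ˢ Ioo y1 y2) ≠ 0 :=
    hμU _ (MeasurableSet.univ.prod measurableSet_Ioo) hstripY
  -- strict monotonicity of marginals
  have hFXlt : FX x1 < FX x2 := by
    have hdisj : Disjoint (Iic x1 ×ˢ (univ : Set ℝ)) (Ioc x1 x2 ×ˢ (univ : Set ℝ)) :=
      Set.disjoint_prod.2 (Or.inl (Iic_disjoint_Ioc le_rfl))
    have hunion : (Iic x1 ×ˢ (univ : Set ℝ)) ∪ (Ioc x1 x2 ×ˢ (univ : Set ℝ))
        = Iic x2 ×ˢ (univ : Set ℝ) := by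
      rw [← union_prod, Iic_union_Ioc_eq_Iic (le_of_lt hx12)]
    have hadd : μ (Iic x1 ×ˢ (univ : Set ℝ)) + μ (Ioc x1 x2 ×ˢ (univ : Set ℝ))
        = μ (Iic x2 ×ˢ (univ : Set ℝ)) := by
      rw [← measure_union hdisj (measurableSet_Ioc.prod MeasurableSet.univ), hunion]
    have hpos : 0 < (μ (Ioc x1 x2 ×ˢ (univ : Set ℝ))).toReal := by
      apply ENNReal.toReal_pos
      · intro h0
        exact hμX (measure_mono_null (prod_mono Ioo_subset_Ioc_self (subset_refl _)) h0)
      · exact measure_ne_top μ _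
    rw [hFX, hFX, ← hadd, ENNReal.toReal_add (measure_ne_top μ _) (measure_ne_top μ _)]
    linarith
  have hFYlt : FY y1 < FY y2 := by
    have hdisj : Disjoint ((univ : Set ℝ) ×ˢ Iic y1) ((univ : Set ℝ) ×ˢ Ioc y1 y2) :=
      Set.disjoint_prod.2 (Or.inr (Iic_disjoint_Ioc le_rfl))
    have hunion : ((univ : Set ℝ) ×ˢ Iic y1) ∪ ((univ : Set ℝ) ×ˢ Ioc y1 y2)
        = (univ : Set ℝ) ×ˢ Iic y2 := by
      rw [← prod_union, Iic_union_Ioc_eq_Iic (le_of_lt hy12)]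
    have hadd : μ ((univ : Set ℝ) ×ˢ Iic y1) + μ ((univ : Set ℝ) ×ˢ Ioc y1 y2)
        = μ ((univ : Set ℝ) ×ˢ Iic y2) := by
      rw [← measure_union hdisj (MeasurableSet.univ.prod measurableSet_Ioc), hunion]
    have hpos : 0 < (μ ((univ : Set ℝ) ×ˢ Ioc y1 y2)).toReal := by
      apply ENNReal.toReal_pos
      · intro h0
        exact hμY (measure_mono_null (prod_mono (subset_refl _) Ioo_subset_Ioc_self) h0)
      · exact measure_ne_top μ _
    rw [hFY, hFY, ← hadd, ENNReal.toReal_add (measure_ne_top μ _) (measure_ne_top μ _)]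
    linarith
  -- four corners are in S
  have hc11 : (x1, y1) ∈ S := hPsub hy1K.1.1.2
  have hc21 : (x2, y1) ∈ S := hPsub hy1K.1.2
  have hc12 : (x1, y2) ∈ S := hPsub hy2K.1.1.2
  have hc22 : (x2, y2) ∈ S := hPsub hy2K.1.2
  have e11 : FX x1 * FY y1 - f x1 - g y1 = c := hfg (x1, y1) hc11
  have e21 : FX x2 * FY y1 - f x2 - g y1 = c := hfg (x2, y1) hc21
  have e12 : FX x1 * FY y2 - f x1 - g y2 = c := hfg (x1, y2) hc12
  have e22 : FX x2 * FY y2 - f x2 - g y2 = c := hfg (x2, y2) hc22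
  have hzero : (FX x2 - FX x1) * (FY y2 - FY y1) = 0 := by
    linear_combination e22 - e21 - e12 + e11
  nlinarith [mul_pos (sub_pos.2 hFXlt) (sub_pos.2 hFYlt)]
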